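/- Let ξ ≥ 0 be a random variable with E[ξ] ∈ (0,∞). For every t ≥ 0, the map x ↦ E[exp(−t·((x+ξ)/(1+ξ))/E[(x+ξ)/(1+ξ)])] is non-increasing on (0,1). -/

import Mathlib

open MeasureTheory

lemma chebyshev_corr {Ω : Type*} [MeasurableSpace Ω] (μ : Measure Ω) [IsProbabilityMeasure μ]
    {f g : Ω → ℝ} (hf : Integrable f μ) (hg : Integrable g μ)
    (hfg : Integrable (fun ω => f ω * g ω) μ)
    (hmono : ∀ ω ω', 0 ≤ (f ω - f ω') * (g ω - g ω')) :
    (∫ ω, f ω ∂μ) * (∫ ω, g ω ∂μ) ≤ ∫ ω, f ω * g ω ∂μ := by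
  have h11 : Integrable (fun p : Ω × Ω => f p.1 * g p.1) (μ.prod μ) := by
    have := hfg.mul_prod (integrable_const (1:ℝ)) (ν := μ)
    simpa using this
  have h22 : Integrable (fun p : Ω × Ω => f p.2 * g p.2) (μ.prod μ) := by
    have := (integrable_const (1:ℝ)).mul_prod hfg (μ := μ)
    simpa using this
  have h12 : Integrable (fun p : Ω × Ω => f p.1 * g p.2) (μ.prod μ) := hf.mul_prod hg
  have h21 : Integrable (fun p : Ω × Ω => f p.2 * g p.1) (μ.prod μ) := by
    have := hg.mul_prod hf (ν := μ)
    simpa [mul_comm] using this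
  have hnn : 0 ≤ ∫ p : Ω × Ω, (f p.1 - f p.2) * (g p.1 - g p.2) ∂(μ.prod μ) :=
    integral_nonneg fun p => hmono p.1 p.2
  have hexp : ∫ p : Ω × Ω, (f p.1 - f p.2) * (g p.1 - g p.2) ∂(μ.prod μ)
      = (∫ p : Ω × Ω, f p.1 * g p.1 ∂(μ.prod μ)) + (∫ p : Ω × Ω, f p.2 * g p.2 ∂(μ.prod μ))
        - (∫ p : Ω × Ω, f p.1 * g p.2 ∂(μ.prod μ)) - (∫ p : Ω × Ω, f p.2 * g p.1 ∂(μ.prod μ)) := by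
    have hfun : (fun p : Ω × Ω => (f p.1 - f p.2) * (g p.1 - g p.2))
        = fun p : Ω × Ω => f p.1 * g p.1 + f p.2 * g p.2 - f p.1 * g p.2 - f p.2 * g p.1 := by
      funext p; ring
    have hA : Integrable (fun p : Ω × Ω => f p.1 * g p.1 + f p.2 * g p.2) (μ.prod μ) :=
      h11.add h22
    have hB : Integrable (fun p : Ω × Ω => f p.1 * g p.1 + f p.2 * g p.2 - f p.1 * g p.2)
        (μ.prod μ) := hA.sub h12
    rw [hfun, integral_sub hB h21, integral_sub hA h12, integral_add h11 h22]
  have e11 : ∫ p : Ω × Ω, f p.1 * g p.1 ∂(μ.prod μ) = ∫ ω, f ω * g ω ∂μ := by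
    have := integral_prod_mul (μ := μ) (ν := μ) (fun ω => f ω * g ω) (fun _ => (1:ℝ))
    simpa using this
  have e22 : ∫ p : Ω × Ω, f p.2 * g p.2 ∂(μ.prod μ) = ∫ ω, f ω * g ω ∂μ := by
    have := integral_prod_mul (μ := μ) (ν := μ) (fun _ => (1:ℝ)) (fun ω => f ω * g ω)
    simpa using this
  have e12 : ∫ p : Ω × Ω, f p.1 * g p.2 ∂(μ.prod μ) = (∫ ω, f ω ∂μ) * (∫ ω, g ω ∂μ) :=
    integral_prod_mul f g
  have e21 : ∫ p : Ω × Ω, f p.2 * g p.1 ∂(μ.prod μ) = (∫ ω, f ω ∂μ) * (∫ ω, g ω ∂μ) := by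
    rw [show (∫ ω, f ω ∂μ) * (∫ ω, g ω ∂μ) = (∫ ω, g ω ∂μ) * (∫ ω, f ω ∂μ) from mul_comm _ _,
      ← integral_prod_mul g f]
    simp [mul_comm]
  rw [hexp, e11, e22, e12, e21] at hnn
  linarith


lemma integrable_of_bdd {Ω : Type*} [MeasurableSpace Ω] {μ : Measure Ω} [IsFiniteMeasure μ]
    {f : Ω → ℝ} {C : ℝ} (hm : Measurable f) (h : ∀ ω, ‖f ω‖ ≤ C) : Integrable f μ :=
  ⟨hm.aestronglyMeasurable, HasFiniteIntegral.of_bounded (ae_of_all _ h)⟩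

lemma key {Ω : Type*} [MeasurableSpace Ω] (μ : Measure Ω) [IsProbabilityMeasure μ]
    (a : Ω → ℝ) (hameas : Measurable a) (ha0 : ∀ ω, 0 < a ω) (ha1 : ∀ ω, a ω ≤ 1)
    (t : ℝ) (ht : 0 ≤ t) (hA1 : (∫ ω, a ω ∂μ) < 1) :
    AntitoneOn (fun x : ℝ =>
      ∫ ω, Real.exp (-t * (1 + (x - 1) * a ω) / (1 + (x - 1) * (∫ ω', a ω' ∂μ))) ∂μ)
      (Set.Ioo 0 1) := by
  set A : ℝ := ∫ ω', a ω' ∂μ with hA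
  have hA0 : 0 ≤ A := integral_nonneg fun ω => (ha0 ω).le
  set F : ℝ → Ω → ℝ := fun x ω => Real.exp (-t * (1 + (x - 1) * a ω) / (1 + (x - 1) * A))
    with hF
  set F' : ℝ → Ω → ℝ :=
    fun x ω => (-t * (a ω - A) / (1 + (x - 1) * A) ^ 2) * F x ω with hF'
  -- positivity of denominator
  have hG : ∀ x : ℝ, 0 < x → 0 < 1 + (x - 1) * A := by
    intro x hx; nlinarith
  have hGbig : ∀ x : ℝ, 0 < x → 1 - A ≤ 1 + (x - 1) * A := by
    intro x hx; nlinarith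
  have h1A : 0 < 1 - A := by linarith
  -- exponent nonpositive, so F ≤ 1
  have hFle : ∀ x : ℝ, 0 < x → x < 1 → ∀ ω, F x ω ≤ 1 := by
    intro x hx0 hx1 ω
    rw [hF]
    apply Real.exp_le_one_iff.2
    have h1 : 0 ≤ 1 + (x - 1) * a ω := by nlinarith [ha0 ω, ha1 ω]
    have h2 : 0 < 1 + (x - 1) * A := hG x hx0
    have : 0 ≤ t * (1 + (x - 1) * a ω) / (1 + (x - 1) * A) := by positivity
    have hrw : -t * (1 + (x - 1) * a ω) / (1 + (x - 1) * A)
        = -(t * (1 + (x - 1) * a ω) / (1 + (x - 1) * A)) := by ring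
    rw [hrw]; linarith
  have hFpos : ∀ x : ℝ, ∀ ω, 0 < F x ω := fun x ω => Real.exp_pos _
  have hFmeas : ∀ x : ℝ, Measurable (F x) := by
    intro x
    exact ((((hameas.const_mul (x - 1)).const_add 1).const_mul (-t)).div_const _).exp
  have hF'meas : ∀ x : ℝ, Measurable (F' x) := by
    intro x
    exact (((hameas.sub_const A).const_mul (-t)).div_const _).mul (hFmeas x)
  have hFint : ∀ x : ℝ, 0 < x → x < 1 → Integrable (F x) μ := by
    intro x hx0 hx1
    refine integrable_of_bdd (hFmeas x) (C := 1) fun ω => ?_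
    rw [Real.norm_eq_abs, abs_of_pos (hFpos x ω)]
    exact hFle x hx0 hx1 ω
  -- F x ω is monotone in a ω (for 0 < x < 1)
  have hFmono : ∀ x : ℝ, 0 < x → x < 1 → ∀ ω ω', a ω ≤ a ω' → F x ω ≤ F x ω' := by
    intro x hx0 hx1 ω ω' hle
    rw [hF]
    apply Real.exp_le_exp.2
    rw [div_le_div_iff_of_pos_right (hG x hx0)]
    nlinarith [mul_nonneg (mul_nonneg ht (by linarith : (0:ℝ) ≤ 1 - x)) (sub_nonneg.2 hle)]
  -- pointwise derivative in x
  have hptderiv : ∀ (x : ℝ), 0 < x → ∀ ω, HasDerivAt (fun y => F y ω) (F' x ω) x := by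
    intro x hx ω
    have hne : (1 + (x - 1) * A) ≠ 0 := (hG x hx).ne'
    have hu : HasDerivAt (fun y : ℝ => -t * (1 + (y - 1) * a ω)) (-t * a ω) x := by
      have h1 : HasDerivAt (fun y : ℝ => (y - 1) * a ω) (a ω) x := by
        simpa using ((hasDerivAt_id x).sub_const 1).mul_const (a ω)
      have h2 := (h1.const_add 1).const_mul (-t)
      simpa using h2
    have hv : HasDerivAt (fun y : ℝ => 1 + (y - 1) * A) A x := by
      have h1 : HasDerivAt (fun y : ℝ => (y - 1) * A) A x := by
        simpa using ((hasDerivAt_id x).sub_const 1).mul_const A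
      simpa using h1.const_add 1
    have hq := (hu.div hv hne).exp
    convert hq using 1
    all_goals simp only [hF', hF, Pi.div_apply]
    field_simp
    ring
  -- derivative of the integral
  have hhas : ∀ x ∈ Set.Ioo (0:ℝ) 1,
      HasDerivAt (fun y => ∫ ω, F y ω ∂μ) (∫ ω, F' x ω ∂μ) x := by
    rintro x ⟨hx0, hx1⟩
    set ε : ℝ := min x (1 - x) with hε
    have hε0 : 0 < ε := lt_min hx0 (by linarith)
    have hball : ∀ y ∈ Metric.ball x ε, 0 < y ∧ y < 1 := by
      intro y hy
      rw [Metric.mem_ball, Real.dist_eq, abs_lt] at hy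
      constructor
      · have := min_le_left x (1 - x); linarith [hy.1]
      · have := min_le_right x (1 - x); linarith [hy.2]
    have H := hasDerivAt_integral_of_dominated_loc_of_deriv_le (μ := μ) (x₀ := x)
      (F := F) (F' := F') (bound := fun _ => t / (1 - A) ^ 2) (Metric.ball_mem_nhds x hε0)
      (Filter.Eventually.of_forall fun y => (hFmeas y).aestronglyMeasurable)
      (hFint x hx0 hx1) ((hF'meas x).aestronglyMeasurable)
      (ae_of_all _ fun ω y hy => ?_) (integrable_const _)
      (ae_of_all _ fun ω y hy => hptderiv y (hball y hy).1 ω)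
    · exact H.2
    · obtain ⟨hy0, hy1⟩ := hball y hy
      have hGy := hG y hy0
      have hGy2 : (1 - A) ^ 2 ≤ (1 + (y - 1) * A) ^ 2 := by nlinarith [hGbig y hy0]
      have hd : |a ω - A| ≤ 1 := by
        rw [abs_le]; constructor
        · nlinarith [ha0 ω, ha1 ω]
        · nlinarith [ha0 ω, ha1 ω]
      have hE : |F y ω| ≤ 1 := by
        rw [abs_of_pos (hFpos y ω)]; exact hFle y hy0 hy1 ω
      have h1A2 : (0:ℝ) < (1 - A) ^ 2 := by positivity
      simp only [hF']
      rw [Real.norm_eq_abs, abs_mul, abs_div, abs_mul, abs_neg, abs_of_nonneg ht,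
        abs_of_nonneg (by positivity : (0:ℝ) ≤ (1 + (y - 1) * A) ^ 2)]
      calc t * |a ω - A| / (1 + (y - 1) * A) ^ 2 * |F y ω|
          ≤ t * 1 / (1 - A) ^ 2 * 1 := by gcongr
        _ = t / (1 - A) ^ 2 := by ring
  -- the derivative is nonpositive
  have haint : Integrable a μ := integrable_of_bdd hameas (C := 1)
    fun ω => by rw [Real.norm_eq_abs, abs_of_pos (ha0 ω)]; exact ha1 ω
  have hD : ∀ x ∈ Set.Ioo (0:ℝ) 1, (∫ ω, F' x ω ∂μ) ≤ 0 := by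
    rintro x ⟨hx0, hx1⟩
    have hFx : Integrable (F x) μ := hFint x hx0 hx1
    have haF : Integrable (fun ω => a ω * F x ω) μ := by
      refine integrable_of_bdd (hameas.mul (hFmeas x)) (C := 1) fun ω => ?_
      rw [Real.norm_eq_abs,
        abs_of_nonneg (mul_nonneg (ha0 ω).le (hFpos x ω).le)]
      nlinarith [ha0 ω, ha1 ω, hFpos x ω, hFle x hx0 hx1 ω]
    have hmono : ∀ ω ω', 0 ≤ (a ω - a ω') * (F x ω - F x ω') := by
      intro ω ω'
      rcases le_total (a ω) (a ω') with h | h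
      · nlinarith [hFmono x hx0 hx1 ω ω' h]
      · exact mul_nonneg (sub_nonneg.2 h) (sub_nonneg.2 (hFmono x hx0 hx1 ω' ω h))
    have hcheb := chebyshev_corr μ haint hFx haF hmono
    have hsplit : (∫ ω, F' x ω ∂μ)
        = (-t / (1 + (x - 1) * A) ^ 2) *
          ((∫ ω, a ω * F x ω ∂μ) - A * (∫ ω, F x ω ∂μ)) := by
      have hfun : (fun ω => F' x ω)
          = fun ω => (-t / (1 + (x - 1) * A) ^ 2) * (a ω * F x ω - A * F x ω) := by
        funext ω; simp only [hF']; ring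
      rw [hfun, integral_const_mul, integral_sub haF (hFx.const_mul A),
        integral_const_mul]
    have hS : 0 ≤ (∫ ω, a ω * F x ω ∂μ) - A * (∫ ω, F x ω ∂μ) := by
      have h2 := hcheb
      rw [← hA] at h2
      linarith
    have hdn : 0 ≤ t / (1 + (x - 1) * A) ^ 2 := by positivity
    rw [hsplit, neg_div, neg_mul]
    exact neg_nonpos.2 (mul_nonneg hdn hS)
  -- conclude
  have hcont : ContinuousOn (fun x => ∫ ω, F x ω ∂μ) (Set.Ioo 0 1) :=
    fun x hx => ((hhas x hx).continuousAt).continuousWithinAt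
  have hanti : AntitoneOn (fun x => ∫ ω, F x ω ∂μ) (Set.Ioo 0 1) := by
    refine antitoneOn_of_deriv_nonpos (convex_Ioo 0 1) hcont ?_ ?_
    · intro x hx
      rw [interior_Ioo] at hx
      exact (hhas x hx).differentiableAt.differentiableWithinAt
    · intro x hx
      rw [interior_Ioo] at hx
      rw [(hhas x hx).deriv]
      exact hD x hx
  exact hanti

theorem stmt2 {Ω : Type*} [MeasurableSpace Ω] (μ : Measure Ω) [IsProbabilityMeasure μ]
    (ξ : Ω → ℝ) (hmeas : Measurable ξ) (hpos : ∀ ω, 0 ≤ ξ ω)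
    (hint : Integrable ξ μ) (hmean : 0 < ∫ ω, ξ ω ∂μ)
    (t : ℝ) (ht : 0 ≤ t) :
    AntitoneOn (fun x : ℝ =>
        ∫ ω, Real.exp (-t * ((x + ξ ω) / (1 + ξ ω)) /
          (∫ ω', (x + ξ ω') / (1 + ξ ω') ∂μ)) ∂μ)
      (Set.Ioo 0 1) := by
  set a : Ω → ℝ := fun ω => (1 + ξ ω)⁻¹ with ha
  have hξpos : ∀ ω, (0:ℝ) < 1 + ξ ω := fun ω => by linarith [hpos ω]
  have ha0 : ∀ ω, 0 < a ω := fun ω => by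
    rw [ha]; exact inv_pos.2 (hξpos ω)
  have ha1 : ∀ ω, a ω ≤ 1 := fun ω => by
    rw [ha]
    exact inv_le_one_of_one_le₀ (by linarith [hpos ω])
  have hameas : Measurable a := (hmeas.const_add 1).inv
  have haint : Integrable a μ := integrable_of_bdd hameas (C := 1)
    fun ω => by rw [Real.norm_eq_abs, abs_of_pos (ha0 ω)]; exact ha1 ω
  -- pointwise rewriting of the ratio
  have hpt : ∀ (x : ℝ) ω, (x + ξ ω) / (1 + ξ ω) = 1 + (x - 1) * a ω := by
    intro x ω
    rw [ha]
    field_simp [(hξpos ω).ne']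
    ring
  -- A < 1
  have hA1 : (∫ ω, a ω ∂μ) < 1 := by
    have hbint : Integrable (fun ω => 1 - a ω) μ := (integrable_const 1).sub haint
    have hbnn : 0 ≤ fun ω => 1 - a ω := fun ω => by simp [sub_nonneg.2 (ha1 ω)]
    have hbpos : 0 < ∫ ω, (1 - a ω) ∂μ := by
      rcases lt_or_eq_of_le (integral_nonneg hbnn) with h | h
      · exact h
      · exfalso
        have hb0 : (fun ω => 1 - a ω) =ᵐ[μ] 0 :=
          (integral_eq_zero_iff_of_nonneg hbnn hbint).1 h.symm
        have hξ0 : ξ =ᵐ[μ] 0 := by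
          filter_upwards [hb0] with ω hω
          simp only [Pi.zero_apply] at hω ⊢
          have : a ω = 1 := by linarith
          rw [ha] at this
          have := inv_eq_one.1 this
          linarith
        have h0 : (∫ ω, ξ ω ∂μ) = 0 := by
          rw [integral_congr_ae hξ0]; simp
        linarith
    have : ∫ ω, (1 - a ω) ∂μ = 1 - ∫ ω, a ω ∂μ := by
      rw [integral_sub (integrable_const 1) haint, integral_const]
      simp
    linarith [this ▸ hbpos]
  have hfun : (fun x : ℝ =>
        ∫ ω, Real.exp (-t * ((x + ξ ω) / (1 + ξ ω)) /
          (∫ ω', (x + ξ ω') / (1 + ξ ω') ∂μ)) ∂μ)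
      = fun x : ℝ =>
        ∫ ω, Real.exp (-t * (1 + (x - 1) * a ω) / (1 + (x - 1) * (∫ ω', a ω' ∂μ))) ∂μ := by
    funext x
    have hg : (∫ ω', (x + ξ ω') / (1 + ξ ω') ∂μ) = 1 + (x - 1) * (∫ ω', a ω' ∂μ) := by
      have h1 : (fun ω' => (x + ξ ω') / (1 + ξ ω')) = fun ω' => 1 + (x - 1) * a ω' := by
        funext ω'; exact hpt x ω'
      rw [h1, integral_add (integrable_const 1) (haint.const_mul (x - 1)),
        integral_const, integral_const_mul]
      simp
    apply integral_congr_ae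
    filter_upwards with ω
    rw [hg, hpt x ω]
  rw [hfun]
  exact key μ a hameas ha0 ha1 t ht hA1
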